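/- Let f̂ : ℝ → ℝ be continuous and F̂(s) = ∫_1^s f̂(σ) dσ. Let u be a C¹ function on an interval I ⊂ (0,∞) such that v(r) := r^{N-1} φ_p(u'(r)) is differentiable on I with v'(r) = -r^{N-1} f̂(u(r)). Then the energy H(r) := |u'(r)|^p/p' + F̂(u(r)) is differentiable on I with H'(r) = -((N-1)/r)·|u'(r)|^p for every r ∈ I. In particular H is non-increasing on I. -/

import Mathlib

open Real Set Filter Topology

noncomputable def phip (p s : ℝ) : ℝ := |s| ^ (p - 2) * s

def Freg (f : ℝ → ℝ) : Prop :=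
  ContinuousOn f (Ici 0) ∧ ContDiffOn ℝ 1 f (Ioi 0)

def Feq (f : ℝ → ℝ) : Prop :=
  f 0 = 0 ∧ f 1 = 0 ∧ (∀ s : ℝ, 0 < s → s < 1 → f s < 0) ∧ (∀ s : ℝ, 1 < s → 0 < f s)

def Fzero (p : ℝ) (f : ℝ → ℝ) : Prop :=
  ∃ c : ℝ, ∀ᶠ s in 𝓝[>] (0:ℝ), c ≤ f s / s ^ (p - 1)

noncomputable def pstar (p : ℝ) (N : ℕ) : EReal :=
  if p < (N:ℝ) then (((N:ℝ) * p / ((N:ℝ) - p) : ℝ) : EReal) else ⊤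

noncomputable def fstar (f : ℝ → ℝ) (s : ℝ) : ℝ := sSup (f '' Icc 1 s)

noncomputable def Fint (f : ℝ → ℝ) (s : ℝ) : ℝ := ∫ σ in (1:ℝ)..s, f σ

def Fsubl (p : ℝ) (f : ℝ → ℝ) : Prop :=
  ∃ M : ℝ, 0 < M ∧ ∀ ε > 0, ∀ᶠ s in atTop, f s / s ^ (p - 1) ≤ M + ε

def FsubcWith (p : ℝ) (N : ℕ) (f : ℝ → ℝ) (η : ℝ) : Prop :=
  (∀ c : ℝ, ∃ᶠ s in atTop, c < f s / s ^ (p - 1)) ∧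
  0 < η ∧ η < 1 ∧
  ∃ L : ℝ, (L : EReal) < pstar p N ∧
    ∀ᶠ s in atTop, fstar f s * s / Fint f (η * s) ≤ L

def Fsubc (p : ℝ) (N : ℕ) (f : ℝ → ℝ) : Prop := ∃ η : ℝ, FsubcWith p N f η

/-- A radial solution of the Neumann problem on `[R1,R2]`. -/
def NeumannSol (p : ℝ) (N : ℕ) (R1 R2 : ℝ) (f u : ℝ → ℝ) : Prop :=
  (∀ x ∈ Icc R1 R2, DifferentiableAt ℝ u x) ∧
  ContinuousOn (deriv u) (Icc R1 R2) ∧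
  (∀ x ∈ Icc R1 R2, 0 < u x) ∧
  deriv u R1 = 0 ∧ deriv u R2 = 0 ∧
  ContinuousOn (fun x => x ^ (N - 1) * phip p (deriv u x)) (Icc R1 R2) ∧
  ∀ x ∈ Ioc R1 R2,
    HasDerivAt (fun t => t ^ (N - 1) * phip p (deriv u t)) (-(x ^ (N - 1)) * f (u x)) x

noncomputable def fhat (f : ℝ → ℝ) (s : ℝ) : ℝ := if 0 ≤ s then f s else 0

noncomputable def Fhat (f : ℝ → ℝ) (s : ℝ) : ℝ := ∫ σ in (1:ℝ)..s, fhat f σ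

/-- A solution of the Cauchy problem with datum `d`, for the nonlinearity `g`. -/
def CauchySol (p : ℝ) (N : ℕ) (R1 R2 : ℝ) (g u : ℝ → ℝ) (d : ℝ) : Prop :=
  (∀ x ∈ Icc R1 R2, DifferentiableAt ℝ u x) ∧
  ContinuousOn (deriv u) (Icc R1 R2) ∧
  u R1 = d ∧ deriv u R1 = 0 ∧
  ContinuousOn (fun x => x ^ (N - 1) * phip p (deriv u x)) (Icc R1 R2) ∧
  ∀ x ∈ Ioc R1 R2,
    HasDerivAt (fun t => t ^ (N - 1) * phip p (deriv u t)) (-(x ^ (N - 1)) * g (u x)) x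

noncomputable def rOne (R1 R2 : ℝ) (u : ℝ → ℝ) : ℝ :=
  sSup {x | x ∈ Icc R1 R2 ∧ ∀ s ∈ Ico R1 x, 0 < u s}

noncomputable def rZero (R2 η d : ℝ) (u : ℝ → ℝ) : ℝ :=
  sSup {x | x ∈ Icc 0 R2 ∧ ∀ s ∈ Ico 0 x, η * d < u s}

noncomputable def energy (p : ℝ) (f u : ℝ → ℝ) (x : ℝ) : ℝ :=
  |deriv u x| ^ p / (p / (p - 1)) + Fhat f (u x)

def NonConstOn (R1 R2 : ℝ) (u : ℝ → ℝ) : Prop :=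
  ∃ x ∈ Icc R1 R2, ∃ x' ∈ Icc R1 R2, u x ≠ u x'

def DistinctOn (R1 R2 : ℝ) (u v : ℝ → ℝ) : Prop :=
  ∃ x ∈ Icc R1 R2, u x ≠ v x

noncomputable def nOverPstar (p : ℝ) (N : ℕ) : ℝ :=
  if p < (N:ℝ) then ((N:ℝ) - p) / p else 0

lemma abs_phip (p : ℝ) (hp : 1 < p) (s : ℝ) : |phip p s| = |s| ^ (p - 1) := by
  rcases eq_or_ne s 0 with rfl | hs
  · simp [phip, Real.zero_rpow (ne_of_gt (by linarith : (0:ℝ) < p - 1))]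
  · have h0 : (0:ℝ) < |s| := abs_pos.2 hs
    rw [phip, abs_mul, abs_of_nonneg (Real.rpow_nonneg (abs_nonneg s) _),
      ← Real.rpow_add_one h0.ne']
    ring_nf

lemma phip_key (p : ℝ) (hp : 1 < p) (s : ℝ) :
    |phip p s| ^ (p / (p - 1) - 2) * phip p s = s := by
  rcases eq_or_ne s 0 with rfl | hs
  · simp [phip]
  · have h0 : (0:ℝ) < |s| := abs_pos.2 hs
    have hp1 : p - 1 ≠ 0 := ne_of_gt (by linarith)
    rw [abs_phip p hp, ← Real.rpow_mul (abs_nonneg s), phip, ← mul_assoc,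
      ← Real.rpow_add h0]
    rw [show (p - 1) * (p / (p - 1) - 2) + (p - 2) = 0 by field_simp; ring]
    simp

lemma abs_rpow_phip (p : ℝ) (hp : 1 < p) (s : ℝ) :
    |phip p s| ^ (p / (p - 1)) = |s| ^ p := by
  have hp1 : p - 1 ≠ 0 := ne_of_gt (by linarith)
  rw [abs_phip p hp, ← Real.rpow_mul (abs_nonneg s)]
  congr 1
  field_simp

lemma self_mul_phip (p : ℝ) (hp : 1 < p) (s : ℝ) : s * phip p s = |s| ^ p := by
  rcases eq_or_ne s 0 with rfl | hs
  · simp [phip, Real.zero_rpow (by positivity : p ≠ 0)]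
  · have h0 : (0:ℝ) < |s| := abs_pos.2 hs
    have h2 : s ^ 2 = |s| ^ (2:ℝ) := by
      rw [Real.rpow_two, sq_abs]
    rw [phip, show s * (|s| ^ (p-2) * s) = |s| ^ (p-2) * s ^ 2 by ring, h2,
      ← Real.rpow_add h0]
    norm_num

theorem stmt8 (p : ℝ) (hp : 1 < p) (N : ℕ) (hN : 1 ≤ N)
    (g : ℝ → ℝ) (hg : Continuous g)
    (I : Set ℝ) (hI : Convex ℝ I) (hIpos : I ⊆ Ioi 0)
    (u : ℝ → ℝ)
    (hu_diff : ∀ x ∈ I, DifferentiableAt ℝ u x)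
    (hu_cont : ContinuousOn (deriv u) I)
    (hode : ∀ x ∈ I, HasDerivAt (fun t => t ^ (N - 1) * phip p (deriv u t))
      (-(x ^ (N - 1)) * g (u x)) x) :
    (∀ x ∈ I, HasDerivAt
      (fun t => |deriv u t| ^ p / (p / (p - 1)) + ∫ σ in (1:ℝ)..u t, g σ)
      (-(((N : ℝ) - 1) / x) * |deriv u x| ^ p) x) ∧
    AntitoneOn (fun x => |deriv u x| ^ p / (p / (p - 1)) + ∫ σ in (1:ℝ)..u x, g σ) I := by
  have hp1 : (0:ℝ) < p - 1 := by linarith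
  have hq : 1 < p / (p - 1) := by
    rw [lt_div_iff₀ hp1]; linarith
  have hq0 : p / (p - 1) ≠ 0 := by positivity
  have key : ∀ x ∈ I, HasDerivAt
      (fun t => |deriv u t| ^ p / (p / (p - 1)) + ∫ σ in (1:ℝ)..u t, g σ)
      (-(((N : ℝ) - 1) / x) * |deriv u x| ^ p) x := by
    intro x hx
    have hx0 : (0:ℝ) < x := hIpos hx
    set φ := phip p (deriv u x) with hφ
    -- derivative of w(t) = V t / t^(N-1)
    have hV : HasDerivAt (fun t => t ^ (N - 1) * phip p (deriv u t))
        (-(x ^ (N - 1)) * g (u x)) x := hode x hx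
    have hden : HasDerivAt (fun t : ℝ => t ^ (N - 1)) (((N - 1 : ℕ) : ℝ) * x ^ (N - 1 - 1)) x :=
      hasDerivAt_pow _ _
    have hwdiv : HasDerivAt (fun t => (t ^ (N - 1) * phip p (deriv u t)) / t ^ (N - 1))
        ((-(x ^ (N - 1)) * g (u x) * x ^ (N - 1) -
          x ^ (N - 1) * φ * (((N - 1 : ℕ) : ℝ) * x ^ (N - 1 - 1))) / (x ^ (N - 1)) ^ 2) x :=
      hV.div hden (pow_ne_zero _ hx0.ne')
    have hW' : (-(x ^ (N - 1)) * g (u x) * x ^ (N - 1) -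
          x ^ (N - 1) * φ * (((N - 1 : ℕ) : ℝ) * x ^ (N - 1 - 1))) / (x ^ (N - 1)) ^ 2
        = -g (u x) - (((N:ℝ) - 1) / x) * φ := by
      obtain ⟨m, rfl⟩ : ∃ m, N = m + 1 := ⟨N - 1, (Nat.succ_pred_eq_of_pos hN).symm⟩
      rcases Nat.eq_zero_or_pos m with rfl | hm
      · simp
      · obtain ⟨k, rfl⟩ : ∃ k, m = k + 1 := ⟨m - 1, (Nat.succ_pred_eq_of_pos hm).symm⟩
        simp only [Nat.add_sub_cancel]
        push_cast
        field_simp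
        ring
    rw [hW'] at hwdiv
    have hev : (fun t => (t ^ (N - 1) * phip p (deriv u t)) / t ^ (N - 1))
        =ᶠ[𝓝 x] (fun t => phip p (deriv u t)) := by
      filter_upwards [Ioi_mem_nhds hx0] with t ht
      exact mul_div_cancel_left₀ _ (pow_ne_zero _ (ne_of_gt ht))
    have hw : HasDerivAt (fun t => phip p (deriv u t))
        (-g (u x) - (((N:ℝ) - 1) / x) * φ) x :=
      hwdiv.congr_of_eventuallyEq hev.symm
    -- chain rule for |·|^q
    have hA : HasDerivAt (fun s : ℝ => |s| ^ (p / (p - 1)))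
        ((p / (p - 1)) * |φ| ^ (p / (p - 1) - 2) * φ) φ := hasDerivAt_abs_rpow φ hq
    have hcomp : HasDerivAt (fun t => |phip p (deriv u t)| ^ (p / (p - 1)))
        ((p / (p - 1)) * |φ| ^ (p / (p - 1) - 2) * φ *
          (-g (u x) - (((N:ℝ) - 1) / x) * φ)) x := by
      have h := hA.comp x hw
      exact h
    have hE1 : HasDerivAt (fun t => |deriv u t| ^ p / (p / (p - 1)))
        ((p / (p - 1)) * |φ| ^ (p / (p - 1) - 2) * φ *
          (-g (u x) - (((N:ℝ) - 1) / x) * φ) / (p / (p - 1))) x := by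
      have : (fun t => |deriv u t| ^ p / (p / (p - 1)))
          = (fun t => |phip p (deriv u t)| ^ (p / (p - 1)) / (p / (p - 1))) := by
        funext t; rw [abs_rpow_phip p hp]
      rw [this]
      exact hcomp.div_const _
    -- FTC part
    have hF : HasDerivAt (fun y => ∫ σ in (1:ℝ)..y, g σ) (g (u x)) (u x) :=
      intervalIntegral.integral_hasDerivAt_right (hg.intervalIntegrable _ _)
        (hg.stronglyMeasurableAtFilter _ _) hg.continuousAt
    have hF2 : HasDerivAt (fun t => ∫ σ in (1:ℝ)..u t, g σ) (g (u x) * deriv u x) x :=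
      hF.comp x (hu_diff x hx).hasDerivAt
    have hsum := hE1.add hF2
    refine hsum.congr_deriv ?_
    have hkey : |φ| ^ (p / (p - 1) - 2) * φ = deriv u x := phip_key p hp _
    have hmul : deriv u x * φ = |deriv u x| ^ p := self_mul_phip p hp _
    rw [show p / (p - 1) * |φ| ^ (p / (p - 1) - 2) * φ *
        (-g (u x) - ((N:ℝ) - 1) / x * φ) / (p / (p - 1))
      = (|φ| ^ (p / (p - 1) - 2) * φ) * (-g (u x) - ((N:ℝ) - 1) / x * φ)
          * (p / (p - 1)) / (p / (p - 1)) by ring,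
      mul_div_cancel_right₀ _ hq0, hkey,
      show deriv u x * (-g (u x) - ((N:ℝ) - 1) / x * φ) + g (u x) * deriv u x
        = -(((N:ℝ) - 1) / x) * (deriv u x * φ) by ring, hmul]
  refine ⟨key, antitoneOn_of_deriv_nonpos hI ?_ ?_ ?_⟩
  · exact fun x hx => ((key x hx).continuousAt).continuousWithinAt
  · exact fun x hx =>
      ((key x (interior_subset hx)).differentiableAt).differentiableWithinAt
  · intro x hx
    rw [(key x (interior_subset hx)).deriv]
    have hx0 : (0:ℝ) < x := hIpos (interior_subset hx)
    have hN1 : (1:ℝ) ≤ (N:ℝ) := by exact_mod_cast hN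
    have : 0 ≤ (((N:ℝ) - 1) / x) * |deriv u x| ^ p :=
      mul_nonneg (div_nonneg (by linarith) hx0.le) (Real.rpow_nonneg (abs_nonneg _) _)
    linarith
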